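/- Let Δ be a (d−1)-dimensional simplicial complex on [n] with indeg(I_Δ) ≥ d. Then indeg(I_Δ) ≤ d + 1, and indeg(I_Δ) = d + 1 holds if and only if I_Δ has a (d+1)-linear resolution. -/

import Mathlib

open MvPolynomial Finset

noncomputable section

namespace ArxivPaper

variable (K : Type) [Field K] (n : ℕ)

/-! ### Graded Betti numbers via the Koszul complex

For an ideal `I` of `S = K[x_1,…,x_n]`, the graded Betti number
`β_{i,j}(I) = dim_K Tor_i^S(K, I)_j` is computed as the `K`-dimension of the degree-`j`
component of the `i`-th homology of `I ⊗_S K_•(x_1,…,x_n)`, where `K_•(x_1,…,x_n)` is the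
Koszul complex (a free resolution of `K`).  A basis element `e_T ⊗ p` (`T ⊆ {1,…,n}` with
`|T| = i`, `p ∈ I`) of the `i`-th term of the tensored complex is encoded as the function
sending `T` to `p`. -/

lemma isHomog_smul (c : K) {p : MvPolynomial (Fin n) K} {m : ℕ}
    (hp : p.IsHomogeneous m) : (c • p).IsHomogeneous m := by
  rw [MvPolynomial.smul_eq_C_mul]
  simpa using (MvPolynomial.isHomogeneous_C (Fin n) c).mul hp

/-- The Koszul differential. -/
def koszulD :
    ((Finset (Fin n)) → MvPolynomial (Fin n) K) →ₗ[K]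
      ((Finset (Fin n)) → MvPolynomial (Fin n) K) where
  toFun f T := ∑ v ∈ Tᶜ,
    ((-1 : MvPolynomial (Fin n) K) ^ ((T.filter (fun w => w < v)).card)) *
      (MvPolynomial.X v * f (insert v T))
  map_add' f g := by
    funext T
    simp [mul_add, Finset.sum_add_distrib]
  map_smul' c f := by
    funext T
    simp [Finset.smul_sum, mul_smul_comm]

/-- The degree-`j` component of the `i`-th term of `I ⊗ K_•(x_1,…,x_n)`:
families `(f_T)_T` with `f_T ∈ I` homogeneous of degree `j - |T|`, supported on `|T| = i`
(the exterior generator `e_T` has degree `|T|`). -/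
def chainPiece (I : Ideal (MvPolynomial (Fin n) K)) (i j : ℕ) :
    Submodule K ((Finset (Fin n)) → MvPolynomial (Fin n) K) where
  carrier := {f | ∀ T : Finset (Fin n),
    f T ∈ I ∧ (f T).IsHomogeneous (j - T.card) ∧ (T.card ≠ i → f T = 0)}
  add_mem' := by
    intro f g hf hg T
    refine ⟨I.add_mem (hf T).1 (hg T).1, (hf T).2.1.add (hg T).2.1, fun h => ?_⟩
    show f T + g T = 0
    rw [(hf T).2.2 h, (hg T).2.2 h, add_zero]
  zero_mem' := by
    intro T
    exact ⟨I.zero_mem, MvPolynomial.isHomogeneous_zero _ _ _, fun _ => rfl⟩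
  smul_mem' := by
    intro c f hf T
    refine ⟨?_, isHomog_smul K n c (hf T).2.1, fun h => ?_⟩
    · show c • f T ∈ I
      rw [MvPolynomial.smul_eq_C_mul]
      exact I.mul_mem_left _ (hf T).1
    · show c • f T = 0
      rw [(hf T).2.2 h, smul_zero]

/-- The (ungraded) `i`-th term of `I ⊗ K_•(x_1,…,x_n)`. -/
def chainAll (I : Ideal (MvPolynomial (Fin n) K)) (i : ℕ) :
    Submodule K ((Finset (Fin n)) → MvPolynomial (Fin n) K) where
  carrier := {f | ∀ T : Finset (Fin n), f T ∈ I ∧ (T.card ≠ i → f T = 0)}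
  add_mem' := by
    intro f g hf hg T
    refine ⟨I.add_mem (hf T).1 (hg T).1, fun h => ?_⟩
    show f T + g T = 0
    rw [(hf T).2 h, (hg T).2 h, add_zero]
  zero_mem' := fun T => ⟨I.zero_mem, fun _ => rfl⟩
  smul_mem' := by
    intro c f hf T
    refine ⟨?_, fun h => ?_⟩
    · show c • f T ∈ I
      rw [MvPolynomial.smul_eq_C_mul]
      exact I.mul_mem_left _ (hf T).1
    · show c • f T = 0
      rw [(hf T).2 h, smul_zero]

/-- The graded Betti number `β_{i,j}(I) = dim_K Tor_i^S(K, I)_j`. -/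
def bettiNumber (I : Ideal (MvPolynomial (Fin n) K)) (i j : ℕ) : ℕ :=
  Module.finrank K
    (↥(chainPiece K n I i j ⊓ LinearMap.ker (koszulD K n)) ⧸
      Submodule.comap (chainPiece K n I i j ⊓ LinearMap.ker (koszulD K n)).subtype
        (Submodule.map (koszulD K n) (chainPiece K n I (i+1) j)))

/-- Castelnuovo–Mumford regularity `reg(I) = sup{ j - i : β_{i,j}(I) ≠ 0 }`. -/
def reg (I : Ideal (MvPolynomial (Fin n) K)) : ℤ :=
  sSup {m : ℤ | ∃ i j : ℕ, bettiNumber K n I i j ≠ 0 ∧ m = (j : ℤ) - (i : ℤ)}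

/-- The initial degree `indeg(I) = inf{ m : I_m ≠ 0 }`. -/
def indeg (I : Ideal (MvPolynomial (Fin n) K)) : ℕ :=
  sInf {m : ℕ | ∃ p ∈ I, p ≠ 0 ∧ p.IsHomogeneous m}

/-- `I` has a `d`-linear resolution iff `reg(I) = indeg(I) = d`. -/
def HasLinearRes (I : Ideal (MvPolynomial (Fin n) K)) (d : ℕ) : Prop :=
  reg K n I = (d : ℤ) ∧ indeg K n I = d

/-- Projective dimension: `projdim(I) = sup{ i : Tor_i^S(K, I) ≠ 0 }`,
with `Tor_i^S(K, I)` computed as Koszul homology. -/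
def projdim (I : Ideal (MvPolynomial (Fin n) K)) : ℕ :=
  sSup {i : ℕ | ¬ Subsingleton
    (↥(chainAll K n I i ⊓ LinearMap.ker (koszulD K n)) ⧸
      Submodule.comap (chainAll K n I i ⊓ LinearMap.ker (koszulD K n)).subtype
        (Submodule.map (koszulD K n) (chainAll K n I (i+1))))}

/-- The graded maximal ideal `(x_1, …, x_n)`. -/
def maxIdeal : Ideal (MvPolynomial (Fin n) K) := Ideal.span (Set.range MvPolynomial.X)

/-- The minimal number of generators `μ(I) = dim_K I / mI`. -/
def mu (I : Ideal (MvPolynomial (Fin n) K)) : ℕ :=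
  Module.finrank K
    ((Submodule.restrictScalars K I) ⧸
      Submodule.comap (Submodule.restrictScalars K I).subtype
        (Submodule.restrictScalars K (maxIdeal K n * I)))

/-- The depth of `S/I`: the longest weakly regular sequence on `S/I` consisting of elements
of the graded maximal ideal. -/
def depthQuot (I : Ideal (MvPolynomial (Fin n) K)) : ℕ :=
  sSup {r : ℕ | ∃ rs : List (MvPolynomial (Fin n) K), rs.length = r ∧
    (∀ x ∈ rs, x ∈ maxIdeal K n) ∧
    RingTheory.Sequence.IsWeaklyRegular (MvPolynomial (Fin n) K ⧸ I) rs}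

/-! ### Reduced simplicial homology

A simplicial complex on the vertex set `Fin n` is encoded by its (finite) set of faces
`Δ : Finset (Finset (Fin n))`; it is a complex when it is closed under taking subsets.
A face `s` has dimension `s.card - 1` (the empty face has dimension `-1`); chains in
dimension `i` are families supported on the faces with `(s.card : ℤ) = i + 1`, and the
boundary map uses the orientation coming from the linear order on `Fin n`.  Since the
empty face is a legitimate face, the resulting homology is *reduced* homology. -/

/-- The simplicial boundary operator (on families indexed by all subsets of `Fin n`). -/
def boundaryMap (R : Type) [CommRing R] :
    ((Finset (Fin n)) → R) →ₗ[R] ((Finset (Fin n)) → R) where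
  toFun f s := ∑ v ∈ sᶜ, ((-1 : R) ^ ((s.filter (fun w => w < v)).card)) * f (insert v s)
  map_add' f g := by
    funext s
    simp [mul_add, Finset.sum_add_distrib]
  map_smul' c f := by
    funext s
    simp only [Pi.smul_apply, smul_eq_mul, RingHom.id_apply, Finset.mul_sum]
    exact Finset.sum_congr rfl fun v _ => by ring

/-- `i`-dimensional chains of `Δ` with coefficients in `R`. -/
def chainGroup (R : Type) [CommRing R] (Δ : Finset (Finset (Fin n))) (i : ℤ) :
    Submodule R ((Finset (Fin n)) → R) where
  carrier := {f | ∀ s : Finset (Fin n), f s ≠ 0 → s ∈ Δ ∧ (s.card : ℤ) = i + 1}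
  add_mem' := by
    intro f g hf hg s hs
    by_cases h1 : f s = 0
    · refine hg s ?_
      intro h2
      apply hs
      show f s + g s = 0
      rw [h1, h2, add_zero]
    · exact hf s h1
  zero_mem' := by intro s hs; exact absurd rfl hs
  smul_mem' := by
    intro c f hf s hs
    refine hf s ?_
    intro h
    apply hs
    show c • f s = 0
    rw [h, smul_zero]

/-- The `i`-th reduced simplicial homology of `Δ` with coefficients in `R`. -/
abbrev reducedHomology (R : Type) [CommRing R] (Δ : Finset (Finset (Fin n))) (i : ℤ) :=
  ↥(chainGroup n R Δ i ⊓ LinearMap.ker (boundaryMap n R)) ⧸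
    Submodule.comap (chainGroup n R Δ i ⊓ LinearMap.ker (boundaryMap n R)).subtype
      (Submodule.map (boundaryMap n R) (chainGroup n R Δ (i + 1)))

/-- The induced subcomplex `Δ_W` on a vertex subset `W`. -/
def induced (Δ : Finset (Finset (Fin n))) (W : Finset (Fin n)) : Finset (Finset (Fin n)) :=
  Δ.filter (fun s => s ⊆ W)

/-- The Stanley–Reisner ideal of `Δ`: generated by the squarefree monomials `x_T` for
non-faces `T`. -/
def srIdeal (Δ : Finset (Finset (Fin n))) : Ideal (MvPolynomial (Fin n) K) :=
  Ideal.span ((fun T : Finset (Fin n) => ∏ v ∈ T, MvPolynomial.X v) '' {T | T ∉ Δ})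

/-! ### Clutters -/

/-- The circuit ideal `I(C̄)` of a `d`-uniform clutter `C` with vertex set `V`: generated by
the squarefree monomials `x_T` for `d`-subsets `T ⊆ V` not in `C`. -/
def circuitIdeal (d : ℕ) (V : Finset (Fin n)) (C : Finset (Finset (Fin n))) :
    Ideal (MvPolynomial (Fin n) K) :=
  Ideal.span ((fun T : Finset (Fin n) => ∏ v ∈ T, MvPolynomial.X v) ''
    {T | T ⊆ V ∧ T.card = d ∧ T ∉ C})

/-- The clique complex `Δ(C)` of a `d`-uniform clutter on vertex set `V`: faces are the
subsets of `V` all of whose `d`-subsets are circuits. -/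
def cliqueCx (d : ℕ) (V : Finset (Fin n)) (C : Finset (Finset (Fin n))) :
    Finset (Finset (Fin n)) :=
  V.powerset.filter (fun G => ∀ T ∈ G.powersetCard d, T ∈ C)

/-- The vertex set of a clutter: all vertices lying in some circuit. -/
def clutterVerts (C : Finset (Finset (Fin n))) : Finset (Fin n) := C.sup id

/-- The set `SC(C)` of submaximal circuits: `(d-1)`-subsets contained in some circuit. -/
def SCset (d : ℕ) (C : Finset (Finset (Fin n))) : Set (Finset (Fin n)) :=
  {e | e.card + 1 = d ∧ ∃ F ∈ C, e ⊆ F}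

/-- The degree `deg_C(e)` of a submaximal circuit. -/
def degC (C : Finset (Finset (Fin n))) (e : Finset (Fin n)) : ℕ :=
  (C.filter (fun F => e ⊆ F)).card

/-- `W` is a clique of the `d`-uniform clutter `C`. -/
def IsClique (d : ℕ) (C : Finset (Finset (Fin n))) (W : Finset (Fin n)) : Prop :=
  ∀ T ∈ W.powersetCard d, T ∈ C

/-- `C` is decomposable, `C = C₁ ⊎ C₂`. -/
def Decomposable (d : ℕ) (C : Finset (Finset (Fin n))) : Prop :=
  ∃ C1 C2 : Finset (Finset (Fin n)), C1 ⊂ C ∧ C2 ⊂ C ∧ C = C1 ∪ C2 ∧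
    (IsClique n d C (clutterVerts n C1 ∩ clutterVerts n C2) ∨
      SCset n d C1 ∩ SCset n d C2 = ∅)

/-- `C` is strongly connected (connected in codimension one). -/
def StronglyConnected (d : ℕ) (C : Finset (Finset (Fin n))) : Prop :=
  ∀ F ∈ C, ∀ G ∈ C,
    Relation.ReflTransGen (fun A B => B ∈ C ∧ (A ∩ B).card + 1 = d) F G

/-- `C` is connected. -/
def ClutterConnected (C : Finset (Finset (Fin n))) : Prop :=
  ∀ v ∈ clutterVerts n C, ∀ w ∈ clutterVerts n C,
    ∃ F ∈ C, ∃ G ∈ C, v ∈ F ∧ w ∈ G ∧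
      Relation.ReflTransGen (fun A B => B ∈ C ∧ (A ∩ B).Nonempty) F G

/-- `C` is a tree: connected, and every nonempty subclutter has a submaximal circuit of
degree one. -/
def IsTree (d : ℕ) (C : Finset (Finset (Fin n))) : Prop :=
  ClutterConnected n C ∧
    ∀ C' ⊆ C, C'.Nonempty → ∃ e ∈ SCset n d C', degC n C' e = 1

/-- `C` (a clutter on `[n]`) is an almost tree: its circuit ideal does not have a `d`-linear
resolution, and every proper subclutter of `C` is a tree. -/
def AlmostTree (d : ℕ) (C : Finset (Finset (Fin n))) : Prop :=
  ¬ HasLinearRes K n (circuitIdeal K n d Finset.univ C) d ∧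
    ∀ C' ⊂ C, IsTree n d C'

/-- `C` (a clutter on `[n]`) is an obstruction to `d`-linearity: its circuit ideal does not
have a `d`-linear resolution, but the circuit ideal of every proper subclutter does. -/
def ObstructionToLin (d : ℕ) (C : Finset (Finset (Fin n))) : Prop :=
  ¬ HasLinearRes K n (circuitIdeal K n d Finset.univ C) d ∧
    ∀ C' ⊂ C, HasLinearRes K n (circuitIdeal K n d (clutterVerts n C') C') d

/-- `C` is minimal to `d`-linearity: an obstruction to `d`-linearity whose clique complex has
dimension `d - 1`. -/
def MinimalToLin (d : ℕ) (C : Finset (Finset (Fin n))) : Prop :=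
  ObstructionToLin K n d C ∧
    (∀ G ∈ cliqueCx n d Finset.univ C, G.card ≤ d) ∧
    (∃ G ∈ cliqueCx n d Finset.univ C, G.card = d)

/-- The simplicial complex `⟨C⟩` generated by the circuits of `C`. -/
def genComplex (C : Finset (Finset (Fin n))) : Finset (Finset (Fin n)) :=
  C.sup Finset.powerset

end ArxivPaper

namespace ArxivPaper

section AuxHomotopy

variable (K : Type) [Field K] (n : ℕ)

/-- Characteristic finsupp of a finset. -/
def chi (U : Finset (Fin n)) : Fin n →₀ ℕ := ∑ u ∈ U, Finsupp.single u 1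

lemma chi_apply (U : Finset (Fin n)) (v : Fin n) : chi n U v = if v ∈ U then 1 else 0 := by
  classical
  rw [chi, Finsupp.finset_sum_apply]
  simp [Finsupp.single_apply, Finset.sum_ite_eq]

lemma chi_apply_of_not_mem {U : Finset (Fin n)} {v : Fin n} (h : v ∉ U) : chi n U v = 0 := by
  rw [chi_apply]; simp [h]

lemma chi_support (U : Finset (Fin n)) : (chi n U).support = U := by
  ext v; simp [Finsupp.mem_support_iff, chi_apply]

lemma chi_erase {U : Finset (Fin n)} {w : Fin n} (h : w ∈ U) :
    chi n (U.erase w) + Finsupp.single w 1 = chi n U := by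
  rw [chi, chi, ← Finset.sum_erase_add U _ h]

lemma degree_eq_sum_univ (a : Fin n →₀ ℕ) : a.degree = ∑ i : Fin n, a i := by
  rw [Finsupp.degree]
  exact Finset.sum_subset (Finset.subset_univ _) (by intro x _ hx; simpa using hx)

lemma degree_add (a b : Fin n →₀ ℕ) : (a + b).degree = a.degree + b.degree := by
  simp [degree_eq_sum_univ, Finset.sum_add_distrib]

lemma degree_single (v : Fin n) : (Finsupp.single v 1 : Fin n →₀ ℕ).degree = 1 := by
  rw [Finsupp.degree_apply, Finsupp.support_single_ne_zero v one_ne_zero]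
  simp

lemma chi_degree (U : Finset (Fin n)) : (chi n U).degree = U.card := by
  rw [Finsupp.degree_apply, chi_support]
  rw [Finset.card_eq_sum_ones U]
  exact Finset.sum_congr rfl (fun v hv => by rw [chi_apply]; simp [hv])

/-- The apex of a multidegree: a variable with exponent `≥ 2` if one exists, otherwise
the smallest variable in the support. -/
def apex (b : Fin n →₀ ℕ) : Option (Fin n) :=
  if h : (b.support.filter (fun v => 2 ≤ b v)).Nonempty then
    some ((b.support.filter (fun v => 2 ≤ b v)).min' h)
  else if h2 : b.support.Nonempty then some (b.support.min' h2) else none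

lemma apex_mem {b : Fin n →₀ ℕ} {v : Fin n} (h : apex n b = some v) : b v ≠ 0 := by
  rw [apex] at h
  split_ifs at h with h1 h2
  · obtain rfl := Option.some_inj.mp h
    exact Finsupp.mem_support_iff.mp (Finset.mem_of_mem_filter _ (Finset.min'_mem _ h1))
  · obtain rfl := Option.some_inj.mp h
    exact Finsupp.mem_support_iff.mp (Finset.min'_mem _ h2)

lemma apex_isSome {b : Fin n →₀ ℕ} (h : b ≠ 0) : ∃ v, apex n b = some v := by
  rw [apex]
  split_ifs with h1 h2
  · exact ⟨_, rfl⟩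
  · exact ⟨_, rfl⟩
  · exact absurd (Finsupp.support_nonempty_iff.mpr h) h2

lemma apex_two {b : Fin n →₀ ℕ} {v w : Fin n} (h : apex n b = some v) (hw : 2 ≤ b w) :
    2 ≤ b v := by
  rw [apex] at h
  have hne : (b.support.filter (fun v => 2 ≤ b v)).Nonempty :=
    ⟨w, Finset.mem_filter.mpr ⟨Finsupp.mem_support_iff.mpr (by omega), hw⟩⟩
  rw [dif_pos hne] at h
  obtain rfl := Option.some_inj.mp h
  exact (Finset.mem_filter.mp (Finset.min'_mem _ hne)).2

end AuxHomotopy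
section AuxHomotopy2

variable (K : Type) [Field K] (n : ℕ)

lemma sign_mul_monomial (k : ℕ) (s : Fin n →₀ ℕ) (c : K) :
    (-1 : MvPolynomial (Fin n) K) ^ k * monomial s c = monomial s ((-1 : K) ^ k * c) := by
  have : ((-1 : MvPolynomial (Fin n) K)) ^ k = C ((-1 : K) ^ k) := by
    rw [map_pow, map_neg, map_one]
  rw [this, C_mul_monomial]

lemma X_mul_monomial' (v : Fin n) (a : Fin n →₀ ℕ) (c : K) :
    MvPolynomial.X v * monomial a c = monomial (a + Finsupp.single v 1) c := by
  rw [← pow_one (MvPolynomial.X v), MvPolynomial.X_pow_eq_monomial, monomial_mul, one_mul,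
    add_comm]

/-- Divide the monomials having apex `v` (relative to the exterior position `U`) by `x_v`. -/
def divApex (U : Finset (Fin n)) (v : Fin n) (p : MvPolynomial (Fin n) K) :
    MvPolynomial (Fin n) K :=
  ∑ a ∈ p.support,
    if apex n (a + chi n U) = some v then monomial (a - Finsupp.single v 1) (coeff a p) else 0

lemma divApex_eq_sum_subset (U : Finset (Fin n)) (v : Fin n) {p : MvPolynomial (Fin n) K}
    {S : Finset (Fin n →₀ ℕ)} (hS : p.support ⊆ S) :
    divApex K n U v p =
      ∑ a ∈ S,
        if apex n (a + chi n U) = some v then monomial (a - Finsupp.single v 1) (coeff a p)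
        else 0 := by
  rw [divApex]
  refine Finset.sum_subset hS (fun a _ ha => ?_)
  rw [MvPolynomial.notMem_support_iff.mp ha]
  simp

lemma divApex_zero (U : Finset (Fin n)) (v : Fin n) : divApex K n U v 0 = 0 := by
  simp [divApex]

lemma divApex_add (U : Finset (Fin n)) (v : Fin n) (p q : MvPolynomial (Fin n) K) :
    divApex K n U v (p + q) = divApex K n U v p + divApex K n U v q := by
  rw [divApex_eq_sum_subset K n U v (S := p.support ∪ q.support)
      (MvPolynomial.support_add (p := p) (q := q)),
    divApex_eq_sum_subset K n U v (S := p.support ∪ q.support) Finset.subset_union_left,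
    divApex_eq_sum_subset K n U v (S := p.support ∪ q.support) Finset.subset_union_right,
    ← Finset.sum_add_distrib]
  refine Finset.sum_congr rfl (fun a _ => ?_)
  rw [MvPolynomial.coeff_add]
  split_ifs with h
  · rw [map_add]
  · rw [add_zero]

lemma divApex_monomial (U : Finset (Fin n)) (v : Fin n) (a : Fin n →₀ ℕ) (c : K) :
    divApex K n U v (monomial a c) =
      if apex n (a + chi n U) = some v then monomial (a - Finsupp.single v 1) c else 0 := by
  classical
  by_cases hc : c = 0
  · subst hc
    rw [map_zero, divApex_zero]
    simp
  · rw [divApex, MvPolynomial.support_monomial, if_neg hc, Finset.sum_singleton,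
      MvPolynomial.coeff_monomial, if_pos rfl]

/-- The contracting homotopy. -/
def hFun (f : Finset (Fin n) → MvPolynomial (Fin n) K) :
    Finset (Fin n) → MvPolynomial (Fin n) K := fun T =>
  ∑ v ∈ T, (-1 : MvPolynomial (Fin n) K) ^ ((T.filter (fun w => w < v)).card) *
    divApex K n (T.erase v) v (f (T.erase v))

lemma hFun_zero : hFun K n 0 = 0 := by
  funext T
  simp [hFun, divApex_zero]

lemma hFun_add (f g : Finset (Fin n) → MvPolynomial (Fin n) K) :
    hFun K n (f + g) = hFun K n f + hFun K n g := by
  funext T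
  simp only [hFun, Pi.add_apply, divApex_add, mul_add, Finset.sum_add_distrib]

/-- The error term supported at the empty face in internal degree `0`. -/
def eFun (f : Finset (Fin n) → MvPolynomial (Fin n) K) :
    Finset (Fin n) → MvPolynomial (Fin n) K :=
  Pi.single (∅ : Finset (Fin n)) (C (coeff 0 (f ∅)))

lemma eFun_add (f g : Finset (Fin n) → MvPolynomial (Fin n) K) :
    eFun K n (f + g) = eFun K n f + eFun K n g := by
  rw [eFun, eFun, eFun, Pi.add_apply, MvPolynomial.coeff_add, map_add, Pi.single_add]

lemma koszulD_single (U : Finset (Fin n)) (a : Fin n →₀ ℕ) (c : K) :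
    koszulD K n (Pi.single U (monomial a c)) =
      ∑ w ∈ U, Pi.single (U.erase w)
        (monomial (a + Finsupp.single w 1)
          ((-1 : K) ^ (((U.erase w).filter (fun u => u < w)).card) * c)) := by
  classical
  funext T
  have lhs : koszulD K n (Pi.single U (monomial a c)) T =
      ∑ v ∈ Tᶜ, if insert v T = U then
        monomial (a + Finsupp.single v 1) ((-1 : K) ^ ((T.filter (fun w => w < v)).card) * c)
      else 0 := by
    simp only [koszulD, LinearMap.coe_mk, AddHom.coe_mk]
    refine Finset.sum_congr rfl (fun v hv => ?_)
    rw [Pi.single_apply]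
    split_ifs with h
    · rw [X_mul_monomial', sign_mul_monomial]
    · simp
  rw [lhs]
  have e1 : ∑ v ∈ Tᶜ, (if insert v T = U then
        monomial (a + Finsupp.single v 1) ((-1 : K) ^ ((T.filter (fun w => w < v)).card) * c)
      else (0 : MvPolynomial (Fin n) K)) =
      ∑ v ∈ Finset.univ, if v ∉ T ∧ insert v T = U then
        monomial (a + Finsupp.single v 1) ((-1 : K) ^ ((T.filter (fun w => w < v)).card) * c)
      else 0 := by
    rw [Finset.sum_congr rfl (g := fun v => if v ∉ T ∧ insert v T = U then
        monomial (a + Finsupp.single v 1) ((-1 : K) ^ ((T.filter (fun w => w < v)).card) * c)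
      else 0) (fun v hv => by
        have hvT : v ∉ T := Finset.mem_compl.mp hv
        simp [hvT])]
    refine Finset.sum_subset (Finset.subset_univ Tᶜ) (fun v _ hv => ?_)
    have hvT : v ∈ T := by simpa using hv
    rw [if_neg (by simp [hvT])]
  have e2 : ∑ w ∈ U, (Pi.single (U.erase w)
        (monomial (a + Finsupp.single w 1)
          ((-1 : K) ^ (((U.erase w).filter (fun u => u < w)).card) * c))
        : Finset (Fin n) → MvPolynomial (Fin n) K) T =
      ∑ v ∈ Finset.univ, if v ∉ T ∧ insert v T = U then
        monomial (a + Finsupp.single v 1) ((-1 : K) ^ ((T.filter (fun w => w < v)).card) * c)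
      else 0 := by
    rw [Finset.sum_congr rfl (g := fun w => if w ∉ T ∧ insert w T = U then
        monomial (a + Finsupp.single w 1) ((-1 : K) ^ ((T.filter (fun u => u < w)).card) * c)
      else 0) (fun w hw => by
        beta_reduce
        rw [Pi.single_apply]
        by_cases h : T = U.erase w
        · have hwT : w ∉ T := by rw [h]; exact Finset.notMem_erase w U
          have hins : insert w T = U := by rw [h, Finset.insert_erase hw]
          rw [if_pos h, if_pos ⟨hwT, hins⟩, h]
        · rw [if_neg h, if_neg ?_]
          rintro ⟨hwT, hins⟩
          exact h (by rw [← hins, Finset.erase_insert hwT]))]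
    refine Finset.sum_subset (Finset.subset_univ U) (fun w _ hw => ?_)
    rw [if_neg ?_]
    rintro ⟨hwT, hins⟩
    exact hw (by rw [← hins]; exact Finset.mem_insert_self w T)
  rw [e1, ← e2]
  exact (Finset.sum_apply _ _ _).symm

end AuxHomotopy2
section AuxHomotopy3

variable (K : Type) [Field K] (n : ℕ)

lemma filter_lt_erase (T : Finset (Fin n)) (v : Fin n) :
    (T.erase v).filter (fun w => w < v) = T.filter (fun w => w < v) := by
  rw [Finset.filter_erase]
  exact Finset.erase_eq_of_notMem (fun h => lt_irrefl v (Finset.mem_filter.mp h).2)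

lemma hFun_single (U : Finset (Fin n)) (a : Fin n →₀ ℕ) (c : K) :
    hFun K n (Pi.single U (monomial a c)) =
      ∑ v ∈ Uᶜ, if apex n (a + chi n U) = some v then
        Pi.single (insert v U)
          (monomial (a - Finsupp.single v 1)
            ((-1 : K) ^ ((U.filter (fun w => w < v)).card) * c))
      else 0 := by
  classical
  funext T
  have e0 : hFun K n (Pi.single U (monomial a c)) T =
      ∑ v ∈ T, if v ∈ T ∧ T.erase v = U ∧ apex n (a + chi n U) = some v then
        monomial (a - Finsupp.single v 1) ((-1 : K) ^ ((U.filter (fun w => w < v)).card) * c)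
      else 0 := by
    rw [hFun]
    refine Finset.sum_congr rfl (fun v hv => ?_)
    rw [Pi.single_apply]
    by_cases h : T.erase v = U
    · rw [if_pos h, ← h, divApex_monomial]
      split_ifs with h2 h3 h3
      · rw [sign_mul_monomial, filter_lt_erase]
      · exact absurd ⟨hv, rfl, h2⟩ h3
      · exact absurd h3.2.2 h2
      · exact mul_zero _
    · rw [if_neg h, divApex_zero, mul_zero,
        if_neg (fun hc => h hc.2.1)]
  rw [e0]
  have e1 : ∑ v ∈ T, (if v ∈ T ∧ T.erase v = U ∧ apex n (a + chi n U) = some v then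
        monomial (a - Finsupp.single v 1) ((-1 : K) ^ ((U.filter (fun w => w < v)).card) * c)
      else (0 : MvPolynomial (Fin n) K)) =
      ∑ v ∈ Finset.univ, if v ∈ T ∧ T.erase v = U ∧ apex n (a + chi n U) = some v then
        monomial (a - Finsupp.single v 1) ((-1 : K) ^ ((U.filter (fun w => w < v)).card) * c)
      else 0 := by
    refine Finset.sum_subset (Finset.subset_univ T) (fun v _ hv => ?_)
    rw [if_neg (fun hc => hv hc.1)]
  rw [e1]
  have e2 : (∑ v ∈ Uᶜ, if apex n (a + chi n U) = some v then
        Pi.single (insert v U)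
          (monomial (a - Finsupp.single v 1)
            ((-1 : K) ^ ((U.filter (fun w => w < v)).card) * c))
      else (0 : Finset (Fin n) → MvPolynomial (Fin n) K)) T =
      ∑ v ∈ Finset.univ, if v ∈ T ∧ T.erase v = U ∧ apex n (a + chi n U) = some v then
        monomial (a - Finsupp.single v 1) ((-1 : K) ^ ((U.filter (fun w => w < v)).card) * c)
      else 0 := by
    rw [Finset.sum_apply]
    rw [Finset.sum_congr rfl (g := fun v => if v ∈ T ∧ T.erase v = U ∧
          apex n (a + chi n U) = some v then
        monomial (a - Finsupp.single v 1) ((-1 : K) ^ ((U.filter (fun w => w < v)).card) * c)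
      else 0) (fun v hv => by
        beta_reduce
        have hvU : v ∉ U := Finset.mem_compl.mp hv
        rw [apply_ite (fun g : Finset (Fin n) → MvPolynomial (Fin n) K => g T),
          Pi.single_apply, Pi.zero_apply]
        by_cases hA : apex n (a + chi n U) = some v
        · rw [if_pos hA]
          by_cases hT : T = insert v U
          · have hv1 : v ∈ T := by rw [hT]; exact Finset.mem_insert_self v U
            have hv2 : T.erase v = U := by rw [hT, Finset.erase_insert hvU]
            rw [if_pos hT, if_pos ⟨hv1, hv2, hA⟩]
          · rw [if_neg hT, if_neg ?_]
            rintro ⟨h1, h2, -⟩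
            exact hT (by rw [← h2, Finset.insert_erase h1])
        · rw [if_neg hA, if_neg (fun hc => hA hc.2.2)])]
    refine Finset.sum_subset (Finset.subset_univ Uᶜ) (fun v _ hv => ?_)
    have hvU : v ∈ U := by simpa using hv
    rw [if_neg ?_]
    rintro ⟨-, h2, -⟩
    exact (Finset.notMem_erase v T) (h2 ▸ hvU)
  exact e2.symm

end AuxHomotopy3
section AuxHomotopy4

variable (K : Type) [Field K] (n : ℕ)

lemma chi_empty : chi n (∅ : Finset (Fin n)) = 0 := by rw [chi, Finset.sum_empty]

lemma apex_zero : apex n 0 = none := by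
  rw [apex]
  simp

lemma sub_single_add {a : Fin n →₀ ℕ} {v : Fin n} (hav : a v ≠ 0) :
    a - Finsupp.single v 1 + Finsupp.single v 1 = a := by
  ext x
  rw [Finsupp.add_apply, Finsupp.tsub_apply, Finsupp.single_apply]
  split_ifs with h
  · subst h; omega
  · omega

lemma add_single_sub (a : Fin n →₀ ℕ) (v : Fin n) :
    a + Finsupp.single v 1 - Finsupp.single v 1 = a := by
  ext x
  rw [Finsupp.tsub_apply, Finsupp.add_apply, Finsupp.single_apply]
  omega

lemma sub_add_swap {a : Fin n →₀ ℕ} {v w : Fin n} (hav : a v ≠ 0) (hvw : v ≠ w) :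
    (a - Finsupp.single v 1) + Finsupp.single w 1 = (a + Finsupp.single w 1) -
      Finsupp.single v 1 := by
  ext x
  simp only [Finsupp.add_apply, Finsupp.tsub_apply, Finsupp.single_apply]
  by_cases h1 : v = x
  · subst h1
    rw [if_neg (fun h : w = v => hvw h.symm)]
    omega
  · rw [if_neg h1]
    omega

lemma erase_insert_ne (U : Finset (Fin n)) {v w : Fin n} (h : w ≠ v) :
    (insert v U).erase w = insert v (U.erase w) := by
  ext x
  simp only [Finset.mem_erase, Finset.mem_insert]
  constructor
  · rintro ⟨hx, hx2 | hx2⟩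
    · exact Or.inl hx2
    · exact Or.inr ⟨hx, hx2⟩
  · rintro (rfl | ⟨hx, hx2⟩)
    · exact ⟨Ne.symm h, Or.inl rfl⟩
    · exact ⟨hx, Or.inr hx2⟩

lemma card_filter_insert (S : Finset (Fin n)) {v : Fin n} (w : Fin n) (hv : v ∉ S) :
    ((insert v S).filter (fun u => u < w)).card =
      (S.filter (fun u => u < w)).card + (if v < w then 1 else 0) := by
  rw [Finset.filter_insert]
  split_ifs with h
  · rw [Finset.card_insert_of_notMem (fun hc => hv (Finset.mem_of_mem_filter _ hc))]
  · rw [add_zero]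

lemma scalar_cancel (p q i j : ℕ) (hij : i + j = 1) (c : K) :
    (-1 : K) ^ (q + i) * ((-1 : K) ^ (p + j) * c) + (-1 : K) ^ p * ((-1 : K) ^ q * c) = 0 := by
  have h1 : (-1 : K) ^ (q + i) * (-1 : K) ^ (p + j) = -((-1 : K) ^ p * (-1 : K) ^ q) := by
    rw [← pow_add, ← pow_add]
    have hE : q + i + (p + j) = (p + q) + 1 := by omega
    rw [hE, pow_succ]
    ring
  calc (-1 : K) ^ (q + i) * ((-1 : K) ^ (p + j) * c) + (-1 : K) ^ p * ((-1 : K) ^ q * c)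
      = ((-1 : K) ^ (q + i) * (-1 : K) ^ (p + j)) * c + ((-1 : K) ^ p * (-1 : K) ^ q) * c := by
        ring
    _ = 0 := by rw [h1]; ring

lemma sign_sq_mul (k : ℕ) (c : K) : (-1 : K) ^ k * ((-1 : K) ^ k * c) = c := by
  rw [← mul_assoc, ← pow_add]
  rw [Even.neg_one_pow ⟨k, rfl⟩, one_mul]

lemma sum_collapse {M : Type} [AddCommGroup M] {s : Finset (Fin n)} {b : Fin n →₀ ℕ}
    {vs : Fin n} (hap : apex n b = some vs) (hv : vs ∈ s) (g : Fin n → M) :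
    (∑ v ∈ s, if apex n b = some v then g v else 0) = g vs := by
  rw [Finset.sum_congr rfl (g := fun v => if vs = v then g v else 0) (fun v _ => by
    beta_reduce
    refine if_congr ?_ rfl rfl
    rw [hap]
    exact ⟨fun h => Option.some_inj.mp h, fun h => h ▸ rfl⟩)]
  rw [Finset.sum_ite_eq, if_pos hv]

lemma sum_collapse_zero {M : Type} [AddCommGroup M] {s : Finset (Fin n)} {b : Fin n →₀ ℕ}
    {vs : Fin n} (hap : apex n b = some vs) (hv : vs ∉ s) (g : Fin n → M) :
    (∑ v ∈ s, if apex n b = some v then g v else 0) = 0 := by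
  rw [Finset.sum_congr rfl (g := fun v => if vs = v then g v else 0) (fun v _ => by
    beta_reduce
    refine if_congr ?_ rfl rfl
    rw [hap]
    exact ⟨fun h => Option.some_inj.mp h, fun h => h ▸ rfl⟩)]
  rw [Finset.sum_ite_eq, if_neg hv]

lemma sum_collapse_none {M : Type} [AddCommGroup M] {s : Finset (Fin n)} {b : Fin n →₀ ℕ}
    (hap : apex n b = none) (g : Fin n → M) :
    (∑ v ∈ s, if apex n b = some v then g v else 0) = 0 := by
  refine Finset.sum_eq_zero (fun v _ => if_neg ?_)
  rw [hap]
  simp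

lemma hFun_finsum {ι : Type} (s : Finset ι) (g : ι → (Finset (Fin n) → MvPolynomial (Fin n) K)) :
    hFun K n (∑ i ∈ s, g i) = ∑ i ∈ s, hFun K n (g i) :=
  map_sum (AddMonoidHom.mk' (hFun K n) (hFun_add K n)) g s

lemma key_identity_single (U : Finset (Fin n)) (a : Fin n →₀ ℕ) (c : K) :
    koszulD K n (hFun K n (Pi.single U (monomial a c))) +
      hFun K n (koszulD K n (Pi.single U (monomial a c))) +
      eFun K n (Pi.single U (monomial a c)) = Pi.single U (monomial a c) := by
  classical
  by_cases hb : a + chi n U = 0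
  · -- degenerate case: `U = ∅`, `a = 0`.
    have hU : U = ∅ := by
      refine Finset.eq_empty_iff_forall_notMem.mpr (fun u hu => ?_)
      have := DFunLike.congr_fun hb u
      rw [Finsupp.add_apply, chi_apply, if_pos hu] at this
      simpa using this
    subst hU
    have ha : a = 0 := by simpa [chi_empty] using hb
    subst ha
    have h1 : hFun K n (Pi.single (∅ : Finset (Fin n)) (monomial 0 c)) = 0 := by
      rw [hFun_single]
      refine Finset.sum_eq_zero (fun v _ => if_neg ?_)
      rw [chi_empty, add_zero, apex_zero]
      simp
    have h2 : koszulD K n (Pi.single (∅ : Finset (Fin n)) (monomial 0 c)) = 0 := by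
      rw [koszulD_single, Finset.sum_empty]
    rw [h1, h2, map_zero, hFun_zero, eFun]
    have h3 : (Pi.single (∅ : Finset (Fin n)) (monomial (0 : Fin n →₀ ℕ) c)
        : Finset (Fin n) → MvPolynomial (Fin n) K) ∅ = monomial 0 c := by
      rw [Pi.single_apply, if_pos rfl]
    rw [h3]
    rw [MvPolynomial.coeff_monomial, if_pos rfl, ← MvPolynomial.C_apply]
    simp
  · -- main case
    obtain ⟨vs, hap⟩ := apex_isSome n hb
    have hEf : eFun K n (Pi.single U (monomial a c)) = 0 := by
      rw [eFun]
      have : coeff 0 ((Pi.single U (monomial a c) :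
          Finset (Fin n) → MvPolynomial (Fin n) K) ∅) = 0 := by
        rw [Pi.single_apply]
        split_ifs with h
        · subst h
          rw [MvPolynomial.coeff_monomial]
          have ha : a ≠ 0 := by
            intro h0
            exact hb (by rw [h0, chi_empty, add_zero])
          rw [if_neg ha]
        · rw [MvPolynomial.coeff_zero]
      rw [this, map_zero, Pi.single_zero]
    rw [hEf, add_zero]
    by_cases hvU : vs ∈ U
    · -- apex inside U
      have h1 : hFun K n (Pi.single U (monomial a c)) = 0 := by
        rw [hFun_single]
        exact sum_collapse_zero n hap (fun hc => (Finset.mem_compl.mp hc) hvU) _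
      rw [h1, map_zero, zero_add]
      rw [koszulD_single, hFun_finsum]
      have hmd : ∀ w ∈ U, a + Finsupp.single w 1 + chi n (U.erase w) = a + chi n U :=
        fun w hw => by rw [add_assoc, add_comm (Finsupp.single w 1), chi_erase n hw]
      rw [Finset.sum_eq_single_of_mem vs hvU (fun w hw hne => by
        beta_reduce
        rw [hFun_single]
        rw [Finset.sum_congr rfl (fun v _ => by rw [hmd w hw])]
        exact sum_collapse_zero n hap
          (fun hc => (Finset.mem_compl.mp hc) (Finset.mem_erase.mpr ⟨Ne.symm hne, hvU⟩)) _)]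
      rw [hFun_single]
      rw [Finset.sum_congr rfl (fun v _ => by rw [hmd vs hvU])]
      rw [sum_collapse n hap (Finset.mem_compl.mpr (Finset.notMem_erase vs U)) _]
      rw [Finset.insert_erase hvU, add_single_sub, sign_sq_mul]
    · -- apex outside U
      have hav : a vs ≠ 0 := by
        have := apex_mem n hap
        rwa [Finsupp.add_apply, chi_apply_of_not_mem n hvU, add_zero] at this
      have hmd : ∀ w ∈ U, a + Finsupp.single w 1 + chi n (U.erase w) = a + chi n U :=
        fun w hw => by rw [add_assoc, add_comm (Finsupp.single w 1), chi_erase n hw]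
      have h1 : hFun K n (Pi.single U (monomial a c)) =
          Pi.single (insert vs U)
            (monomial (a - Finsupp.single vs 1)
              ((-1 : K) ^ ((U.filter (fun w => w < vs)).card) * c)) := by
        rw [hFun_single]
        exact sum_collapse n hap (Finset.mem_compl.mpr hvU) _
      have h2 : hFun K n (koszulD K n (Pi.single U (monomial a c))) =
          ∑ w ∈ U, Pi.single (insert vs (U.erase w))
            (monomial ((a + Finsupp.single w 1) - Finsupp.single vs 1)
              ((-1 : K) ^ (((U.erase w).filter (fun u => u < vs)).card) *
                ((-1 : K) ^ (((U.erase w).filter (fun u => u < w)).card) * c))) := by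
        rw [koszulD_single, hFun_finsum]
        refine Finset.sum_congr rfl (fun w hw => ?_)
        rw [hFun_single]
        rw [Finset.sum_congr rfl (fun v _ => by rw [hmd w hw])]
        exact sum_collapse n hap
          (Finset.mem_compl.mpr (fun hc => hvU (Finset.mem_of_mem_erase hc))) _
      rw [h1, h2, koszulD_single, Finset.sum_insert hvU]
      have ht1 : (Pi.single ((insert vs U).erase vs)
          (monomial ((a - Finsupp.single vs 1) + Finsupp.single vs 1)
            ((-1 : K) ^ ((((insert vs U).erase vs).filter (fun u => u < vs)).card) *
              ((-1 : K) ^ ((U.filter (fun w => w < vs)).card) * c)))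
          : Finset (Fin n) → MvPolynomial (Fin n) K)
          = Pi.single U (monomial a c) := by
        rw [Finset.erase_insert hvU, sub_single_add n hav, sign_sq_mul]
      rw [ht1, add_assoc, ← Finset.sum_add_distrib]
      have hz : ∀ w ∈ U, Pi.single ((insert vs U).erase w)
          (monomial ((a - Finsupp.single vs 1) + Finsupp.single w 1)
            ((-1 : K) ^ ((((insert vs U).erase w).filter (fun u => u < w)).card) *
              ((-1 : K) ^ ((U.filter (fun u => u < vs)).card) * c)))
          + Pi.single (insert vs (U.erase w))
            (monomial ((a + Finsupp.single w 1) - Finsupp.single vs 1)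
              ((-1 : K) ^ (((U.erase w).filter (fun u => u < vs)).card) *
                ((-1 : K) ^ (((U.erase w).filter (fun u => u < w)).card) * c)))
          = (0 : Finset (Fin n) → MvPolynomial (Fin n) K) := by
        intro w hw
        have hne : w ≠ vs := fun h => hvU (h ▸ hw)
        have hvsW : vs ∉ U.erase w := fun hc => hvU (Finset.mem_of_mem_erase hc)
        have hk2 : (U.filter (fun u => u < vs)).card =
            ((U.erase w).filter (fun u => u < vs)).card + (if w < vs then 1 else 0) := by
          conv_lhs => rw [(Finset.insert_erase hw).symm]
          rw [card_filter_insert n (U.erase w) vs (Finset.notMem_erase w U)]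
        have hij : (if vs < w then 1 else 0) + (if w < vs then 1 else 0) = 1 := by
          rcases lt_or_gt_of_ne (Ne.symm hne) with h | h
          · rw [if_pos h, if_neg (asymm h)]
          · rw [if_neg (asymm h), if_pos h]
        rw [erase_insert_ne n U hne, sub_add_swap n hav (Ne.symm hne), hk2,
          card_filter_insert n (U.erase w) w hvsW, ← Pi.single_add, ← map_add,
          scalar_cancel K _ _ _ _ hij, map_zero, Pi.single_zero]
      rw [Finset.sum_congr rfl hz, Finset.sum_const_zero, add_zero]

end AuxHomotopy4
section AuxGlobal

variable (K : Type) [Field K] (n : ℕ)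

lemma key_identity (f : Finset (Fin n) → MvPolynomial (Fin n) K) :
    koszulD K n (hFun K n f) + hFun K n (koszulD K n f) + eFun K n f = f := by
  classical
  let Φ : (Finset (Fin n) → MvPolynomial (Fin n) K) →+
      (Finset (Fin n) → MvPolynomial (Fin n) K) :=
    ((koszulD K n).toAddMonoidHom.comp (AddMonoidHom.mk' (hFun K n) (hFun_add K n))) +
    ((AddMonoidHom.mk' (hFun K n) (hFun_add K n)).comp (koszulD K n).toAddMonoidHom) +
    AddMonoidHom.mk' (eFun K n) (eFun_add K n)
  have hΦ : ∀ g, Φ g = koszulD K n (hFun K n g) + hFun K n (koszulD K n g) + eFun K n g :=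
    fun g => rfl
  have hdec : f = ∑ U : Finset (Fin n), ∑ a ∈ (f U).support,
      Pi.single U (monomial a (coeff a (f U))) := by
    conv_lhs => rw [← Finset.univ_sum_single f]
    refine Finset.sum_congr rfl (fun U _ => ?_)
    conv_lhs => rw [MvPolynomial.as_sum (f U)]
    exact map_sum (AddMonoidHom.mk' (Pi.single U) (fun p q => Pi.single_add U p q)) _ _
  calc koszulD K n (hFun K n f) + hFun K n (koszulD K n f) + eFun K n f
      = Φ f := (hΦ f).symm
    _ = ∑ U : Finset (Fin n), ∑ a ∈ (f U).support,
        Φ (Pi.single U (monomial a (coeff a (f U)))) := by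
        conv_lhs => rw [hdec]
        rw [map_sum]
        exact Finset.sum_congr rfl (fun U _ => map_sum _ _ _)
    _ = ∑ U : Finset (Fin n), ∑ a ∈ (f U).support,
        Pi.single U (monomial a (coeff a (f U))) := by
        refine Finset.sum_congr rfl (fun U _ => Finset.sum_congr rfl (fun a _ => ?_))
        rw [hΦ]
        exact key_identity_single K n U a (coeff a (f U))
    _ = f := hdec.symm

lemma chi_insert {a : Fin n} {s : Finset (Fin n)} (h : a ∉ s) :
    chi n (insert a s) = chi n s + Finsupp.single a 1 := by
  rw [chi, chi, Finset.sum_insert h, add_comm]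

lemma prodX_eq (T : Finset (Fin n)) :
    (∏ v ∈ T, MvPolynomial.X v : MvPolynomial (Fin n) K) = monomial (chi n T) 1 := by
  classical
  induction T using Finset.induction with
  | empty =>
    rw [Finset.prod_empty, chi_empty]
    simp
  | insert _ _ h =>
    rename_i a s ih
    rw [Finset.prod_insert h, ih, X_mul_monomial', chi_insert n h]

lemma monomial_mem_srIdeal {Δ : Finset (Finset (Fin n))} {d : ℕ}
    (hbig : ∀ T : Finset (Fin n), d + 1 ≤ T.card → T ∉ Δ) {c : Fin n →₀ ℕ}
    (hc : d + 1 ≤ c.support.card) (k : K) : monomial c k ∈ srIdeal K n Δ := by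
  obtain ⟨T, hTsub, hTcard⟩ := Finset.exists_subset_card_eq hc
  have hTmem : (monomial (chi n T) 1 : MvPolynomial (Fin n) K) ∈ srIdeal K n Δ := by
    rw [← prodX_eq]
    exact Ideal.subset_span ⟨T, hbig T (le_of_eq hTcard.symm), rfl⟩
  have hexp : c - chi n T + chi n T = c := by
    ext x
    rw [Finsupp.add_apply, Finsupp.tsub_apply, chi_apply]
    split_ifs with h
    · have : 1 ≤ c x := by
        have := Finsupp.mem_support_iff.mp (hTsub h)
        omega
      omega
    · omega
  have heq : monomial c k = monomial (c - chi n T) k * monomial (chi n T) 1 := by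
    rw [monomial_mul, mul_one, hexp]
  rw [heq]
  exact Ideal.mul_mem_left _ _ hTmem

lemma supp_card_of_mem_srIdeal {Δ : Finset (Finset (Fin n))} {d : ℕ}
    (hsmall : ∀ T : Finset (Fin n), T ∉ Δ → d + 1 ≤ T.card)
    {p : MvPolynomial (Fin n) K} (hp : p ∈ srIdeal K n Δ) :
    ∀ a ∈ p.support, d + 1 ≤ a.support.card := by
  classical
  rw [srIdeal] at hp
  refine Submodule.span_induction (p := fun x _ => ∀ a ∈ x.support, d + 1 ≤ a.support.card)
    ?_ ?_ ?_ ?_ hp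
  · rintro x ⟨T, hT, rfl⟩ a ha
    have ha' : a ∈ (monomial (chi n T) (1 : K)).support := by
      rw [← prodX_eq]
      exact ha
    rw [MvPolynomial.support_monomial, if_neg (one_ne_zero)] at ha'
    rw [Finset.mem_singleton] at ha'
    subst ha' 
    rw [chi_support]
    exact hsmall T hT
  · intro a ha
    simp at ha
  · intro x y _ _ hx hy a ha
    have := MvPolynomial.support_add (p := x) (q := y) ha
    rcases Finset.mem_union.mp this with h | h
    · exact hx a h
    · exact hy a h
  · intro r x _ hx a ha
    have hsm : r • x = r * x := rfl
    rw [hsm] at ha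
    have := MvPolynomial.support_mul r x ha
    rw [Finset.mem_add] at this
    obtain ⟨a1, ha1, a2, ha2, rfl⟩ := this
    refine le_trans (hx a2 ha2) (Finset.card_le_card ?_)
    intro w hw
    rw [Finsupp.mem_support_iff] at hw ⊢
    rw [Finsupp.add_apply]
    omega

end AuxGlobal
section AuxVanish

variable (K : Type) [Field K] (n : ℕ)

lemma sign_mul_homog (k m : ℕ) {p : MvPolynomial (Fin n) K} (hp : p.IsHomogeneous m) :
    ((-1 : MvPolynomial (Fin n) K) ^ k * p).IsHomogeneous m := by
  have h1 : ((-1 : MvPolynomial (Fin n) K)) ^ k = C ((-1 : K) ^ k) := by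
    rw [map_pow, map_neg, map_one]
  rw [h1]
  simpa using (MvPolynomial.isHomogeneous_C (Fin n) ((-1 : K) ^ k)).mul hp

lemma apex_av_ne {U : Finset (Fin n)} {v : Fin n} (hvU : v ∉ U) {a : Fin n →₀ ℕ}
    (h : apex n (a + chi n U) = some v) : a v ≠ 0 := by
  have := apex_mem n h
  rwa [Finsupp.add_apply, chi_apply_of_not_mem n hvU, add_zero] at this

lemma divApex_homog {U : Finset (Fin n)} {v : Fin n} (hvU : v ∉ U) {m : ℕ}
    {p : MvPolynomial (Fin n) K} (hp : p.IsHomogeneous m) :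
    (divApex K n U v p).IsHomogeneous (m - 1) := by
  rw [divApex]
  refine MvPolynomial.IsHomogeneous.sum _ _ _ (fun a ha => ?_)
  split_ifs with h
  · refine MvPolynomial.isHomogeneous_monomial _ ?_
    have hdeg : a.degree = m := by
      by_contra hne
      exact (MvPolynomial.mem_support_iff.mp ha) (hp.coeff_eq_zero hne)
    have hav : a v ≠ 0 := apex_av_ne n hvU h
    have hd2 : a.degree = (a - Finsupp.single v 1).degree + 1 := by
      conv_lhs => rw [← sub_single_add n hav]
      rw [degree_add, degree_single]
    omega
  · exact MvPolynomial.isHomogeneous_zero _ _ _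

lemma divApex_mem {Δ : Finset (Finset (Fin n))} {d : ℕ}
    (hbig : ∀ T : Finset (Fin n), d + 1 ≤ T.card → T ∉ Δ)
    {U : Finset (Fin n)} {v : Fin n} (hvU : v ∉ U) {m : ℕ}
    {p : MvPolynomial (Fin n) K} (hp : p.IsHomogeneous m) (hm : d + 2 ≤ m)
    (hsupp : ∀ a ∈ p.support, d + 1 ≤ a.support.card) :
    divApex K n U v p ∈ srIdeal K n Δ := by
  rw [divApex]
  refine Ideal.sum_mem _ (fun a ha => ?_)
  split_ifs with h
  · refine monomial_mem_srIdeal K n hbig ?_ _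
    have hav : a v ≠ 0 := apex_av_ne n hvU h
    by_cases h2 : 2 ≤ a v
    · refine le_trans (hsupp a ha) (Finset.card_le_card ?_)
      intro x hx
      rw [Finsupp.mem_support_iff] at hx ⊢
      rw [Finsupp.tsub_apply, Finsupp.single_apply]
      split_ifs with hxv
      · subst hxv
        omega
      · omega
    · -- squarefree case
      have hdeg : a.degree = m := by
        by_contra hne
        exact (MvPolynomial.mem_support_iff.mp ha) (hp.coeff_eq_zero hne)
      have hall : ∀ w, a w ≤ 1 := by
        intro w
        by_contra hw
        have h2b : 2 ≤ (a + chi n U) w := by rw [Finsupp.add_apply]; omega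
        have := apex_two n h h2b
        rw [Finsupp.add_apply, chi_apply_of_not_mem n hvU, add_zero] at this
        omega
      have hcard : a.support.card = m := by
        rw [← hdeg, Finsupp.degree_apply, Finset.card_eq_sum_ones]
        refine Finset.sum_congr rfl (fun x hx => ?_)
        have h1 := hall x
        have h2 := Finsupp.mem_support_iff.mp hx
        omega
      have hsub2 : a.support \ {v} ⊆ (a - Finsupp.single v 1).support := by
        intro x hx
        rw [Finset.mem_sdiff, Finset.mem_singleton] at hx
        rw [Finsupp.mem_support_iff, Finsupp.tsub_apply, Finsupp.single_apply,
          if_neg (fun hh : v = x => hx.2 hh.symm)]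
        have := Finsupp.mem_support_iff.mp hx.1
        omega
      have hcard2 : a.support.card - 1 ≤ (a.support \ {v}).card := by
        rw [← Finset.erase_eq]
        by_cases hv : v ∈ a.support
        · rw [Finset.card_erase_of_mem hv]
        · rw [Finset.erase_eq_of_notMem hv]
          omega
      have := Finset.card_le_card hsub2
      omega
  · exact (srIdeal K n Δ).zero_mem

end AuxVanish
section AuxVanish2

variable (K : Type) [Field K] (n : ℕ)

lemma hFun_mem_chainPiece {Δ : Finset (Finset (Fin n))} {d i j : ℕ}
    (hbig : ∀ T : Finset (Fin n), d + 1 ≤ T.card → T ∉ Δ)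
    (hsmall : ∀ T : Finset (Fin n), T ∉ Δ → d + 1 ≤ T.card)
    (hj : i + d + 2 ≤ j) {z : Finset (Fin n) → MvPolynomial (Fin n) K}
    (hz : z ∈ chainPiece K n (srIdeal K n Δ) i j) :
    hFun K n z ∈ chainPiece K n (srIdeal K n Δ) (i + 1) j := by
  have h3 : ∀ T : Finset (Fin n), T.card ≠ i + 1 → hFun K n z T = 0 := by
    intro T hT
    rw [hFun]
    refine Finset.sum_eq_zero (fun v hv => ?_)
    have hcz : z (T.erase v) = 0 := by
      refine (hz (T.erase v)).2.2 ?_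
      rw [Finset.card_erase_of_mem hv]
      have : 0 < T.card := Finset.card_pos.mpr ⟨v, hv⟩
      omega
    rw [hcz, divApex_zero, mul_zero]
  intro T
  refine ⟨?_, ?_, h3 T⟩
  · -- membership in the ideal
    rw [hFun]
    refine Ideal.sum_mem _ (fun v hv => ?_)
    refine Ideal.mul_mem_left _ _ ?_
    by_cases hc : (T.erase v).card = i
    · have hhom := (hz (T.erase v)).2.1
      rw [hc] at hhom
      refine divApex_mem K n hbig (Finset.notMem_erase v T) hhom (by omega) ?_
      exact supp_card_of_mem_srIdeal K n hsmall (hz (T.erase v)).1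
    · rw [(hz (T.erase v)).2.2 hc, divApex_zero]
      exact (srIdeal K n Δ).zero_mem
  · -- homogeneity
    by_cases hT : T.card = i + 1
    · rw [hFun]
      refine MvPolynomial.IsHomogeneous.sum _ _ _ (fun v hv => ?_)
      refine sign_mul_homog K n _ _ ?_
      have hcz : (T.erase v).card = i := by
        rw [Finset.card_erase_of_mem hv, hT]
        omega
      have hhom := (hz (T.erase v)).2.1
      rw [hcz] at hhom
      have := divApex_homog K n (Finset.notMem_erase v T) hhom
      have heq : j - i - 1 = j - T.card := by omega
      rwa [heq] at this
    · rw [h3 T hT]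
      exact MvPolynomial.isHomogeneous_zero _ _ _

lemma betti_vanish {Δ : Finset (Finset (Fin n))} {d : ℕ}
    (hbig : ∀ T : Finset (Fin n), d + 1 ≤ T.card → T ∉ Δ)
    (hsmall : ∀ T : Finset (Fin n), T ∉ Δ → d + 1 ≤ T.card)
    (i j : ℕ) (hj : i + d + 2 ≤ j) : bettiNumber K n (srIdeal K n Δ) i j = 0 := by
  rw [bettiNumber]
  have hsub : Subsingleton
      (↥(chainPiece K n (srIdeal K n Δ) i j ⊓ LinearMap.ker (koszulD K n)) ⧸
        Submodule.comap (chainPiece K n (srIdeal K n Δ) i j ⊓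
            LinearMap.ker (koszulD K n)).subtype
          (Submodule.map (koszulD K n) (chainPiece K n (srIdeal K n Δ) (i + 1) j))) := by
    rw [Submodule.Quotient.subsingleton_iff, Submodule.eq_top_iff']
    rintro ⟨z, hz⟩
    rw [Submodule.mem_comap, Submodule.mem_map]
    have hz1 : z ∈ chainPiece K n (srIdeal K n Δ) i j := (Submodule.mem_inf.mp hz).1
    have hz2 : koszulD K n z = 0 := LinearMap.mem_ker.mp (Submodule.mem_inf.mp hz).2
    refine ⟨hFun K n z, hFun_mem_chainPiece K n hbig hsmall hj hz1, ?_⟩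
    have he : eFun K n z = 0 := by
      have h0 : coeff 0 (z ∅) = 0 := by
        refine ((hz1 ∅).2.1).coeff_eq_zero ?_
        rw [map_zero, Finset.card_empty]
        omega
      rw [eFun, h0, map_zero, Pi.single_zero]
    have hkey := key_identity K n z
    rw [hz2, hFun_zero, add_zero, he, add_zero] at hkey
    exact hkey
  exact Module.finrank_zero_of_subsingleton

end AuxVanish2
section AuxNonzero

variable (K : Type) [Field K] (n : ℕ)

lemma chainPiece_findim (I : Ideal (MvPolynomial (Fin n) K)) (i j : ℕ) :
    FiniteDimensional K ↥(chainPiece K n I i j) := by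
  classical
  let W := MvPolynomial.restrictTotalDegree (Fin n) K j
  let φ : ↥(chainPiece K n I i j) →ₗ[K] (Finset (Fin n) → ↥W) :=
    { toFun := fun f T => ⟨f.1 T, by
        rw [MvPolynomial.mem_restrictTotalDegree]
        exact le_trans ((f.2 T).2.1.totalDegree_le) (Nat.sub_le j _)⟩
      map_add' := fun f g => funext (fun T => Subtype.ext rfl)
      map_smul' := fun c f => funext (fun T => Subtype.ext rfl) }
  have hinj : Function.Injective φ := by
    intro f g h
    refine Subtype.ext (funext (fun T => ?_))
    exact congrArg Subtype.val (congrFun h T)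
  exact Module.Finite.of_injective φ hinj

lemma betti_nonzero {Δ : Finset (Finset (Fin n))} {d : ℕ}
    (hbig : ∀ T : Finset (Fin n), d + 1 ≤ T.card → T ∉ Δ)
    (hno : ∀ p ∈ srIdeal K n Δ, p.IsHomogeneous d → p = 0)
    (T₀ : Finset (Fin n)) (hT₀ : T₀.card = d + 1) :
    bettiNumber K n (srIdeal K n Δ) 0 (d + 1) ≠ 0 := by
  classical
  have hcp1 : chainPiece K n (srIdeal K n Δ) 1 (d + 1) = ⊥ := by
    rw [eq_bot_iff]
    intro f hf
    rw [Submodule.mem_bot]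
    funext T
    by_cases hT : T.card = 1
    · refine hno _ ((hf T).1) ?_
      have := (hf T).2.1
      rwa [hT, Nat.add_sub_cancel] at this
    · exact (hf T).2.2 hT
  rw [bettiNumber, hcp1, Submodule.map_bot, Submodule.comap_bot, Submodule.ker_subtype]
  rw [(Submodule.quotEquivOfEqBot _ rfl).finrank_eq]
  set M := chainPiece K n (srIdeal K n Δ) 0 (d + 1) ⊓ LinearMap.ker (koszulD K n) with hM
  have hFD : FiniteDimensional K ↥(chainPiece K n (srIdeal K n Δ) 0 (d + 1)) :=
    chainPiece_findim K n _ 0 (d + 1)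
  have hFD2 : FiniteDimensional K ↥M := Submodule.finiteDimensional_of_le inf_le_left
  set f₀ : Finset (Fin n) → MvPolynomial (Fin n) K :=
    Pi.single ∅ (monomial (chi n T₀) 1) with hf₀
  have hmem : f₀ ∈ M := by
    rw [hM, Submodule.mem_inf]
    constructor
    · intro T
      by_cases hT : T = ∅
      · subst hT
        rw [hf₀, Pi.single_eq_same]
        refine ⟨monomial_mem_srIdeal K n hbig (by rw [chi_support, hT₀]) 1, ?_, ?_⟩
        · refine MvPolynomial.isHomogeneous_monomial _ ?_
          rw [chi_degree, hT₀, Finset.card_empty, Nat.sub_zero]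
        · intro h
          simp at h
      · rw [hf₀, Pi.single_eq_of_ne hT]
        exact ⟨(srIdeal K n Δ).zero_mem, MvPolynomial.isHomogeneous_zero _ _ _, fun _ => rfl⟩
    · rw [LinearMap.mem_ker]
      funext T
      show ∑ v ∈ Tᶜ, _ = (0 : MvPolynomial (Fin n) K)
      refine Finset.sum_eq_zero (fun v hv => ?_)
      rw [hf₀, Pi.single_eq_of_ne (Finset.insert_ne_empty v T), mul_zero, mul_zero]
  have hne : f₀ ≠ 0 := by
    intro h
    have := congrFun h ∅
    rw [hf₀, Pi.single_eq_same] at this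
    have h1 : (1 : K) = 0 := by
      have := MvPolynomial.monomial_eq_zero.mp this
      exact this
    exact one_ne_zero h1
  have hnt : Nontrivial ↥M := ⟨⟨f₀, hmem⟩, 0, fun h => hne (congrArg Subtype.val h)⟩
  exact (Module.finrank_pos_iff.mpr hnt).ne'

end AuxNonzero
theorem indeg_le_and_linearity
    (K : Type) [Field K] (n d : ℕ) (Δ : Finset (Finset (Fin n)))
    (hdc : ∀ s ∈ Δ, ∀ t ⊆ s, t ∈ Δ)
    (hdim : (∀ s ∈ Δ, s.card ≤ d) ∧ ∃ s ∈ Δ, s.card = d)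
    (hindeg : ∀ m : ℕ, m < d → ∀ p ∈ srIdeal K n Δ, p.IsHomogeneous m → p = 0) :
    indeg K n (srIdeal K n Δ) ≤ d + 1 ∧
      (indeg K n (srIdeal K n Δ) = d + 1 ↔ HasLinearRes K n (srIdeal K n Δ) (d + 1)) := by
  classical
  by_cases hn : d + 1 ≤ n
  · have hbig : ∀ T : Finset (Fin n), d + 1 ≤ T.card → T ∉ Δ := fun T hT hmem => by
      have := hdim.1 T hmem
      omega
    obtain ⟨T₀, -, hT₀⟩ := Finset.exists_subset_card_eq
      (show d + 1 ≤ (Finset.univ : Finset (Fin n)).card by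
        rw [Finset.card_univ, Fintype.card_fin]; exact hn)
    have hwit : (d + 1) ∈ {m : ℕ | ∃ p ∈ srIdeal K n Δ, p ≠ 0 ∧ p.IsHomogeneous m} := by
      refine ⟨monomial (chi n T₀) 1,
        monomial_mem_srIdeal K n hbig (by rw [chi_support]; omega) 1, ?_, ?_⟩
      · intro h
        exact one_ne_zero (MvPolynomial.monomial_eq_zero.mp h)
      · exact MvPolynomial.isHomogeneous_monomial _ (by rw [chi_degree, hT₀])
    have hIle : indeg K n (srIdeal K n Δ) ≤ d + 1 := Nat.sInf_le hwit
    refine ⟨hIle, ?_⟩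
    by_cases hEq : indeg K n (srIdeal K n Δ) = d + 1
    · refine iff_of_true hEq ⟨?_, hEq⟩
      have hsmall : ∀ T : Finset (Fin n), T ∉ Δ → d + 1 ≤ T.card := by
        intro T hT
        by_contra hc
        push_neg at hc
        have hmem : (monomial (chi n T) 1 : MvPolynomial (Fin n) K) ∈ srIdeal K n Δ := by
          rw [← prodX_eq]
          exact Ideal.subset_span ⟨T, hT, rfl⟩
        have hle : indeg K n (srIdeal K n Δ) ≤ T.card := Nat.sInf_le
          ⟨monomial (chi n T) 1, hmem,
            fun h => one_ne_zero (MvPolynomial.monomial_eq_zero.mp h),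
            MvPolynomial.isHomogeneous_monomial _ (chi_degree n T)⟩
        omega
      have hno : ∀ p ∈ srIdeal K n Δ, p.IsHomogeneous d → p = 0 := by
        intro p hp hph
        by_contra hne
        have : indeg K n (srIdeal K n Δ) ≤ d := Nat.sInf_le ⟨p, hp, hne, hph⟩
        omega
      rw [reg]
      have hbdd : ∀ m ∈ {m : ℤ | ∃ i j : ℕ, bettiNumber K n (srIdeal K n Δ) i j ≠ 0 ∧
          m = (j : ℤ) - (i : ℤ)}, m ≤ ((d : ℤ) + 1) := by
        rintro m ⟨i, j, hb, rfl⟩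
        by_contra hc
        push_neg at hc
        refine hb (betti_vanish K n hbig hsmall i j ?_)
        omega
      have hmemS : ((d : ℤ) + 1) ∈ {m : ℤ | ∃ i j : ℕ,
          bettiNumber K n (srIdeal K n Δ) i j ≠ 0 ∧ m = (j : ℤ) - (i : ℤ)} := by
        refine ⟨0, d + 1, betti_nonzero K n hbig hno T₀ hT₀, ?_⟩
        push_cast
        ring
      have hcast : ((d + 1 : ℕ) : ℤ) = (d : ℤ) + 1 := by push_cast; ring
      rw [hcast]
      exact le_antisymm (csSup_le ⟨_, hmemS⟩ hbdd) (le_csSup ⟨(d : ℤ) + 1, hbdd⟩ hmemS)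
    · exact iff_of_false hEq (fun h => hEq h.2)
  · -- here `n = d` and `Δ` is the full power set, so the ideal is zero
    have hall : ∀ T : Finset (Fin n), T ∈ Δ := by
      obtain ⟨s₀, hs₀, hcard⟩ := hdim.2
      have hs₀univ : s₀ = Finset.univ :=
        Finset.eq_univ_of_card s₀ (by
          have := Finset.card_le_univ s₀
          rw [Fintype.card_fin] at this ⊢
          omega)
      intro T
      exact hdc s₀ hs₀ T (by rw [hs₀univ]; exact Finset.subset_univ T)
    have hempty : srIdeal K n Δ = ⊥ := by
      rw [srIdeal]
      have h0 : {T : Finset (Fin n) | T ∉ Δ} = ∅ := by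
        rw [Set.eq_empty_iff_forall_notMem]
        intro T hT
        exact hT (hall T)
      rw [h0, Set.image_empty, Ideal.span_empty]
    have hindeg0 : indeg K n (srIdeal K n Δ) = 0 := by
      rw [indeg]
      have h0 : {m : ℕ | ∃ p ∈ srIdeal K n Δ, p ≠ 0 ∧ p.IsHomogeneous m} = ∅ := by
        rw [Set.eq_empty_iff_forall_notMem]
        rintro m ⟨p, hp, hne, -⟩
        rw [hempty, Ideal.mem_bot] at hp
        exact hne hp
      rw [h0, Nat.sInf_empty]
    refine ⟨by omega, ?_⟩
    refine iff_of_false (by omega) ?_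
    intro h
    have h2 := h.2
    rw [hindeg0] at h2
    omega

end ArxivPaper
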